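/- If the φ-product is associative on stochastic exponentials, then for all f, g, h ∈ L²([0,T]): φ(⟨f,g⟩)·φ(⟨f+g,h⟩) = φ(⟨f,g+h⟩)·φ(⟨g,h⟩). In particular, choosing f ⊥ g, the continuous function φ with φ(0)=1 satisfies φ(s+t) = φ(s)φ(t) for all s, t in the range of inner products, hence φ(x) = e^{αx} for some α ∈ ℝ. -/

import Mathlib

open MeasureTheory

theorem mul_integrable_of_memL2 {α : Type*} [MeasurableSpace α] {μ : Measure α}
    {f g : α → ℝ} (hf : MemLp f 2 μ) (hg : MemLp g 2 μ) :
    Integrable (fun x => f x * g x) μ := by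
  have hbd : Integrable (fun x => (f x ^ 2 + g x ^ 2) / 2) μ :=
    (hf.integrable_sq.add hg.integrable_sq).div_const 2
  have hm : AEStronglyMeasurable (fun x => f x * g x) μ := hf.1.mul hg.1
  refine hbd.mono' hm (Filter.Eventually.of_forall fun x => ?_)
  rw [Real.norm_eq_abs, abs_mul]
  nlinarith [abs_nonneg (f x), abs_nonneg (g x), sq_abs (f x), sq_abs (g x),
    sq_nonneg (|f x| - |g x|)]

/-- Theorem 3.3: if the `φ`-product is associative (here: associative on
stochastic exponentials, hypothesis `hassoc`), then for all
`f, g, h ∈ L²([0,T])` one has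
`φ(⟨f,g⟩)·φ(⟨f+g,h⟩) = φ(⟨f,g+h⟩)·φ(⟨g,h⟩)`; choosing `f ⊥ g`, the continuous
function `φ` with `φ(0) = 1` satisfies `φ(s+t) = φ(s)·φ(t)` for all `s, t`,
hence `φ(x) = exp(α·x)` for some `α ∈ ℝ`.  The hypotheses record:
`hprod`, the `φ`-product of exponentials `ℰ(f) ∘_φ ℰ(g) = φ(⟨f,g⟩)ℰ(f)ℰ(g)`;
`hsmul`, bilinearity in scalars; `hEmul`, `ℰ(f)ℰ(g) = ℰ(f+g)e^{⟨f,g⟩}`;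
`hEpos`, positivity of stochastic exponentials; and `hrange`, that an orthogonal
pair `f ⊥ g` with arbitrary prescribed inner products `⟨f,h⟩ = s`, `⟨g,h⟩ = t`
can always be found. -/
theorem phi_product_associative_functional_equation
    {Ω : Type*} [MeasureSpace Ω] [IsProbabilityMeasure (volume : Measure Ω)]
    (T : ℝ) (hT : 0 < T)
    (φ : ℝ → ℝ) (hφcont : Continuous φ) (hφ0 : φ 0 = 1)
    (E : (ℝ → ℝ) → Ω → ℝ)
    (prodφ : (Ω → ℝ) → (Ω → ℝ) → Ω → ℝ)
    (hprod : ∀ f g : ℝ → ℝ, MemLp f 2 (volume.restrict (Set.Icc (0:ℝ) T)) →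
      MemLp g 2 (volume.restrict (Set.Icc (0:ℝ) T)) →
      prodφ (E f) (E g)
        = fun ω => φ (∫ s in Set.Icc (0:ℝ) T, f s * g s) * (E f ω * E g ω))
    (hsmul : ∀ (c : ℝ) (X Y : Ω → ℝ),
      prodφ (c • X) Y = c • prodφ X Y ∧ prodφ X (c • Y) = c • prodφ X Y)
    (hEmul : ∀ f g : ℝ → ℝ, MemLp f 2 (volume.restrict (Set.Icc (0:ℝ) T)) →
      MemLp g 2 (volume.restrict (Set.Icc (0:ℝ) T)) →
      (fun ω => E f ω * E g ω)
        = fun ω => E (f + g) ω * Real.exp (∫ s in Set.Icc (0:ℝ) T, f s * g s))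
    (hEpos : ∀ (f : ℝ → ℝ) (ω : Ω), 0 < E f ω)
    (hrange : ∀ s t : ℝ, ∃ f g h : ℝ → ℝ,
      MemLp f 2 (volume.restrict (Set.Icc (0:ℝ) T)) ∧
      MemLp g 2 (volume.restrict (Set.Icc (0:ℝ) T)) ∧
      MemLp h 2 (volume.restrict (Set.Icc (0:ℝ) T)) ∧
      (∫ x in Set.Icc (0:ℝ) T, f x * g x) = 0 ∧
      (∫ x in Set.Icc (0:ℝ) T, f x * h x) = s ∧
      (∫ x in Set.Icc (0:ℝ) T, g x * h x) = t)
    (hassoc : ∀ f g h : ℝ → ℝ,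
      MemLp f 2 (volume.restrict (Set.Icc (0:ℝ) T)) →
      MemLp g 2 (volume.restrict (Set.Icc (0:ℝ) T)) →
      MemLp h 2 (volume.restrict (Set.Icc (0:ℝ) T)) →
      prodφ (prodφ (E f) (E g)) (E h) = prodφ (E f) (prodφ (E g) (E h))) :
    (∀ f g h : ℝ → ℝ,
      MemLp f 2 (volume.restrict (Set.Icc (0:ℝ) T)) →
      MemLp g 2 (volume.restrict (Set.Icc (0:ℝ) T)) →
      MemLp h 2 (volume.restrict (Set.Icc (0:ℝ) T)) →
      φ (∫ x in Set.Icc (0:ℝ) T, f x * g x) *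
          φ (∫ x in Set.Icc (0:ℝ) T, (f x + g x) * h x)
        = φ (∫ x in Set.Icc (0:ℝ) T, f x * (g x + h x)) *
            φ (∫ x in Set.Icc (0:ℝ) T, g x * h x)) ∧
    (∀ s t : ℝ, φ (s + t) = φ s * φ t) ∧
    (∃ α : ℝ, ∀ x : ℝ, φ x = Real.exp (α * x)) := by
  have hne : Nonempty Ω := by
    by_contra hc
    have huniv : (Set.univ : Set Ω) = ∅ := by
      ext x; exact ⟨fun _ => hc ⟨x⟩, fun hx => hx.elim⟩
    have h1 : (volume : Measure Ω) Set.univ = 1 := measure_univ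
    rw [huniv] at h1
    simp at h1
  obtain ⟨ω⟩ := hne
  -- Part 1
  have key : ∀ f g h : ℝ → ℝ,
      MemLp f 2 (volume.restrict (Set.Icc (0:ℝ) T)) →
      MemLp g 2 (volume.restrict (Set.Icc (0:ℝ) T)) →
      MemLp h 2 (volume.restrict (Set.Icc (0:ℝ) T)) →
      φ (∫ x in Set.Icc (0:ℝ) T, f x * g x) *
          φ (∫ x in Set.Icc (0:ℝ) T, (f x + g x) * h x)
        = φ (∫ x in Set.Icc (0:ℝ) T, f x * (g x + h x)) *
            φ (∫ x in Set.Icc (0:ℝ) T, g x * h x) := by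
    intro f g h hf hg hh
    have hfg := hf.add hg
    have hgh := hg.add hh
    set a := ∫ x in Set.Icc (0:ℝ) T, f x * g x with ha
    set b := ∫ x in Set.Icc (0:ℝ) T, (f x + g x) * h x with hb
    set c := ∫ x in Set.Icc (0:ℝ) T, f x * (g x + h x) with hc
    set d := ∫ x in Set.Icc (0:ℝ) T, g x * h x with hd
    have hib : (∫ x in Set.Icc (0:ℝ) T, (f + g) x * h x) = b := by
      simp only [Pi.add_apply]; rfl
    have hic : (∫ x in Set.Icc (0:ℝ) T, f x * (g + h) x) = c := by
      simp only [Pi.add_apply]; rfl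
    -- LHS of associativity
    have L : prodφ (prodφ (E f) (E g)) (E h)
        = fun ω => (φ a * Real.exp a) * (φ b * Real.exp b) * E (f + g + h) ω := by
      rw [hprod f g hf hg]
      have e1 : (fun ω => φ a * (E f ω * E g ω))
          = (φ a * Real.exp a) • E (f + g) := by
        funext ω'
        have := congrFun (hEmul f g hf hg) ω'
        simp only [Pi.smul_apply, smul_eq_mul, this]
        ring
      rw [e1, (hsmul _ _ _).1, hprod (f + g) h hfg hh]
      funext ω'
      have := congrFun (hEmul (f + g) h hfg hh) ω'
      simp only [Pi.smul_apply, smul_eq_mul, this, hib]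
      ring
    have R : prodφ (E f) (prodφ (E g) (E h))
        = fun ω => (φ d * Real.exp d) * (φ c * Real.exp c) * E (f + (g + h)) ω := by
      rw [hprod g h hg hh]
      have e2 : (fun ω => φ d * (E g ω * E h ω))
          = (φ d * Real.exp d) • E (g + h) := by
        funext ω'
        have := congrFun (hEmul g h hg hh) ω'
        simp only [Pi.smul_apply, smul_eq_mul, this]
        ring
      rw [e2, (hsmul _ _ _).2, hprod f (g + h) hf hgh]
      funext ω'
      have := congrFun (hEmul f (g + h) hf hgh) ω'
      simp only [Pi.smul_apply, smul_eq_mul, this, hic]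
      ring
    have heq := congrFun (hassoc f g h hf hg hh) ω
    rw [L, R] at heq
    rw [add_assoc] at heq
    have hcancel : (φ a * Real.exp a) * (φ b * Real.exp b)
        = (φ d * Real.exp d) * (φ c * Real.exp c) :=
      mul_right_cancel₀ (ne_of_gt (hEpos (f + (g + h)) ω)) heq
    -- integral arithmetic
    have hIfh := mul_integrable_of_memL2 hf hh
    have hIgh := mul_integrable_of_memL2 hg hh
    have hIfg := mul_integrable_of_memL2 hf hg
    have hb' : b = (∫ x in Set.Icc (0:ℝ) T, f x * h x)
        + ∫ x in Set.Icc (0:ℝ) T, g x * h x := by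
      rw [hb, ← integral_add hIfh hIgh]
      congr 1; funext x; ring
    have hc' : c = (∫ x in Set.Icc (0:ℝ) T, f x * g x)
        + ∫ x in Set.Icc (0:ℝ) T, f x * h x := by
      rw [hc, ← integral_add hIfg hIfh]
      congr 1; funext x; ring
    have habcd : a + b = c + d := by rw [hb', hc']; ring
    have hexp : Real.exp a * Real.exp b = Real.exp c * Real.exp d := by
      rw [← Real.exp_add, ← Real.exp_add, habcd]
    have h2 : (φ a * φ b) * (Real.exp a * Real.exp b)
        = (φ c * φ d) * (Real.exp c * Real.exp d) := by
      linear_combination hcancel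
    rw [← hexp] at h2
    exact mul_right_cancel₀ (by positivity) h2
  refine ⟨key, ?_⟩
  -- Part 2
  have hmul : ∀ s t : ℝ, φ (s + t) = φ s * φ t := by
    intro s t
    obtain ⟨f, g, h, hf, hg, hh, hfg0, hfhs, hght⟩ := hrange s t
    have k := key f g h hf hg hh
    have hIfh := mul_integrable_of_memL2 hf hh
    have hIgh := mul_integrable_of_memL2 hg hh
    have hIfg := mul_integrable_of_memL2 hf hg
    have h1 : (∫ x in Set.Icc (0:ℝ) T, (f x + g x) * h x) = s + t := by
      rw [← hfhs, ← hght, ← integral_add hIfh hIgh]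
      congr 1; funext x; ring
    have h2 : (∫ x in Set.Icc (0:ℝ) T, f x * (g x + h x)) = s := by
      have : (∫ x in Set.Icc (0:ℝ) T, f x * (g x + h x))
          = (∫ x in Set.Icc (0:ℝ) T, f x * g x)
            + ∫ x in Set.Icc (0:ℝ) T, f x * h x := by
        rw [← integral_add hIfg hIfh]; congr 1; funext x; ring
      rw [this, hfg0, hfhs, zero_add]
    rw [hfg0, h1, h2, hght, hφ0, one_mul] at k
    exact k
  refine ⟨hmul, ?_⟩
  -- Part 3
  have hne0 : ∀ x : ℝ, φ x ≠ 0 := by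
    intro x h0
    have h1 : φ (x + -x) = φ x * φ (-x) := hmul x (-x)
    rw [add_neg_cancel, hφ0, h0, zero_mul] at h1
    exact one_ne_zero h1
  have hpos : ∀ x : ℝ, 0 < φ x := by
    intro x
    have h1 : φ x = φ (x / 2) * φ (x / 2) := by
      rw [← hmul]; norm_num
    rw [h1]
    exact mul_self_pos.mpr (hne0 _)
  set ψ : ℝ →+ ℝ := AddMonoidHom.mk' (fun x => Real.log (φ x))
    (fun x y => by simp only [hmul x y, Real.log_mul (hne0 x) (hne0 y)]) with hψ
  have hψcont : Continuous ψ := hφcont.log hne0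
  refine ⟨Real.log (φ 1), fun x => ?_⟩
  have hlin : ψ (x • (1:ℝ)) = x • ψ 1 := map_real_smul ψ hψcont x 1
  simp only [smul_eq_mul, mul_one] at hlin
  have : Real.log (φ x) = x * Real.log (φ 1) := hlin
  rw [← Real.exp_log (hpos x), this, mul_comm]
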